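/- Let c > 0 and let x : (−c, c) → ℝ be a twice continuously differentiable function with x(t) > 0 for all t ∈ (−c, c), satisfying x''(t)/(1 + x'(t)²) = 1/x(t) − (1/2)(x(t) − x'(t)·t) for all t ∈ (−c, c), and with x'(0) = 0. Then x(−t) = x(t) for all t ∈ (−c, c). -/

import Mathlib

open Set
set_option maxHeartbeats 1000000

/-- Pointwise Lipschitz-type estimate for the profile-curve vector field. -/
lemma stmt10_est (m M L b τ u₁ w₁ u₂ w₂ D : ℝ) (hm : 0 < m) (hmM : m ≤ M) (hL : 0 ≤ L)
    (hb : 0 < b) (hτ : |τ| ≤ b)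
    (hu1 : u₁ ∈ Icc m M) (hu2 : u₂ ∈ Icc m M) (hw1 : |w₁| ≤ L) (hw2 : |w₂| ≤ L)
    (hDu : |u₁ - u₂| ≤ D) (hDw : |w₁ - w₂| ≤ D) (hD0 : 0 ≤ D) :
    |(1 + w₁ ^ 2) * (1 / u₁ - (1 / 2) * (u₁ - w₁ * τ))
      - (1 + w₂ ^ 2) * (1 / u₂ - (1 / 2) * (u₂ - w₂ * τ))|
      ≤ ((1 + L ^ 2) * (1 / m ^ 2 + 1 / 2 + b / 2) + (1 / m + (M + L * b) / 2) * (2 * L) + 1)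
          * D := by
  obtain ⟨hu11, hu12⟩ := hu1
  obtain ⟨hu21, hu22⟩ := hu2
  set K' : ℝ := (1 + L ^ 2) * (1 / m ^ 2 + 1 / 2 + b / 2) + (1 / m + (M + L * b) / 2) * (2 * L)
    with hK'
  have hu10 : (0:ℝ) < u₁ := lt_of_lt_of_le hm hu11
  have hu20 : (0:ℝ) < u₂ := lt_of_lt_of_le hm hu21
  set H₁ : ℝ := 1 / u₁ - (1 / 2) * (u₁ - w₁ * τ) with hH₁
  set H₂ : ℝ := 1 / u₂ - (1 / 2) * (u₂ - w₂ * τ) with hH₂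
  have hinv : |1 / u₁ - 1 / u₂| ≤ 1 / m ^ 2 * |u₁ - u₂| := by
    rw [div_sub_div _ _ (ne_of_gt hu10) (ne_of_gt hu20), abs_div,
      abs_of_pos (mul_pos hu10 hu20)]
    simp only [one_mul, mul_one]
    rw [abs_sub_comm, div_le_iff₀ (mul_pos hu10 hu20)]
    have hmul : m ^ 2 ≤ u₁ * u₂ := by nlinarith
    have h5 : 1 / m ^ 2 * |u₁ - u₂| * m ^ 2 = |u₁ - u₂| := by field_simp
    have h6 := mul_le_mul_of_nonneg_left hmul
      (mul_nonneg (by positivity : (0:ℝ) ≤ 1 / m ^ 2) (abs_nonneg (u₁ - u₂)))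
    rw [mul_assoc] at h5 ⊢
    linarith
  have hτw : |w₁ * τ - w₂ * τ| ≤ b * |w₁ - w₂| := by
    have h : w₁ * τ - w₂ * τ = (w₁ - w₂) * τ := by ring
    rw [h, abs_mul]
    calc |w₁ - w₂| * |τ| ≤ |w₁ - w₂| * b := mul_le_mul_of_nonneg_left hτ (abs_nonneg _)
    _ = b * |w₁ - w₂| := mul_comm _ _
  have hHdiff : |H₁ - H₂| ≤ (1 / m ^ 2 + 1 / 2 + b / 2) * D := by
    have heq : H₁ - H₂
        = (1 / u₁ - 1 / u₂) + (-(1/2)) * (u₁ - u₂) + (1/2) * (w₁ * τ - w₂ * τ) := by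
      rw [hH₁, hH₂]; ring
    rw [heq]
    have t1 := abs_add_le ((1 / u₁ - 1 / u₂) + (-(1/2)) * (u₁ - u₂)) ((1/2) * (w₁ * τ - w₂ * τ))
    have t2 := abs_add_le (1 / u₁ - 1 / u₂) ((-(1/2)) * (u₁ - u₂))
    have e1 : |(-(1/2) : ℝ) * (u₁ - u₂)| = (1/2) * |u₁ - u₂| := by
      rw [abs_mul]; norm_num
    have e2 : |(1/2 : ℝ) * (w₁ * τ - w₂ * τ)| = (1/2) * |w₁ * τ - w₂ * τ| := by
      rw [abs_mul]; norm_num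
    rw [e1] at t2
    rw [e2] at t1
    have h1 : 1 / m ^ 2 * |u₁ - u₂| ≤ 1 / m ^ 2 * D :=
      mul_le_mul_of_nonneg_left hDu (by positivity)
    have h3 : b * |w₁ - w₂| ≤ b * D := mul_le_mul_of_nonneg_left hDw hb.le
    linarith
  have hH2bound : |H₂| ≤ 1 / m + (M + L * b) / 2 := by
    rw [hH₂]
    have t1 := abs_sub (1 / u₂) ((1/2) * (u₂ - w₂ * τ))
    have h1 : |1 / u₂| = 1 / u₂ := abs_of_pos (by positivity)
    have h2 : (1:ℝ) / u₂ ≤ 1 / m := one_div_le_one_div_of_le hm hu21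
    have h3 : |u₂ - w₂ * τ| ≤ M + L * b := by
      have t2 := abs_sub u₂ (w₂ * τ)
      have h4 : |u₂| = u₂ := abs_of_pos hu20
      have h5 : |w₂ * τ| ≤ L * b := by
        rw [abs_mul]; exact mul_le_mul hw2 hτ (abs_nonneg _) hL
      linarith
    have e2 : |(1/2 : ℝ) * (u₂ - w₂ * τ)| = (1/2) * |u₂ - w₂ * τ| := by
      rw [abs_mul]; norm_num
    rw [e2] at t1
    linarith
  have hAdiff : |(1 + w₁ ^ 2) - (1 + w₂ ^ 2)| ≤ 2 * L * D := by
    have heq : (1 + w₁ ^ 2) - (1 + w₂ ^ 2) = (w₁ + w₂) * (w₁ - w₂) := by ring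
    rw [heq, abs_mul]
    have h1 : |w₁ + w₂| ≤ 2 * L := by
      have := abs_add_le w₁ w₂; linarith
    exact mul_le_mul h1 hDw (abs_nonneg _) (by linarith)
  have hA1 : |1 + w₁ ^ 2| ≤ 1 + L ^ 2 := by
    rw [abs_of_pos (by positivity)]
    nlinarith [sq_abs w₁, abs_nonneg w₁]
  have key : |(1 + w₁ ^ 2) * H₁ - (1 + w₂ ^ 2) * H₂| ≤ K' * D := by
    have heq : (1 + w₁ ^ 2) * H₁ - (1 + w₂ ^ 2) * H₂
        = (1 + w₁ ^ 2) * (H₁ - H₂) + ((1 + w₁ ^ 2) - (1 + w₂ ^ 2)) * H₂ := by ring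
    rw [heq]
    have t1 := abs_add_le ((1 + w₁ ^ 2) * (H₁ - H₂)) (((1 + w₁ ^ 2) - (1 + w₂ ^ 2)) * H₂)
    rw [abs_mul, abs_mul] at t1
    have h1 : |1 + w₁ ^ 2| * |H₁ - H₂| ≤ (1 + L ^ 2) * ((1 / m ^ 2 + 1 / 2 + b / 2) * D) :=
      mul_le_mul hA1 hHdiff (abs_nonneg _) (by positivity)
    have h2 : |(1 + w₁ ^ 2) - (1 + w₂ ^ 2)| * |H₂|
        ≤ (2 * L * D) * (1 / m + (M + L * b) / 2) := by
      have hM : (0:ℝ) < M := lt_of_lt_of_le hm hmM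
      have e3 : (0:ℝ) ≤ L * b := mul_nonneg hL hb.le
      apply mul_le_mul hAdiff hH2bound (abs_nonneg _)
      positivity
    have heq2 : (1 + L ^ 2) * ((1 / m ^ 2 + 1 / 2 + b / 2) * D)
        + (2 * L * D) * (1 / m + (M + L * b) / 2) = K' * D := by rw [hK']; ring
    calc |(1 + w₁ ^ 2) * (H₁ - H₂) + ((1 + w₁ ^ 2) - (1 + w₂ ^ 2)) * H₂|
        ≤ |1 + w₁ ^ 2| * |H₁ - H₂| + |(1 + w₁ ^ 2) - (1 + w₂ ^ 2)| * |H₂| := t1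
      _ ≤ (1 + L ^ 2) * ((1 / m ^ 2 + 1 / 2 + b / 2) * D)
            + (2 * L * D) * (1 / m + (M + L * b) / 2) := add_le_add h1 h2
      _ = K' * D := heq2
  have last : K' * D ≤ (K' + 1) * D := by nlinarith
  exact le_trans key last

/-- Lipschitz estimate for the profile-curve vector field on a compact box. -/
lemma stmt10_lip (m M L b : ℝ) (hm : 0 < m) (hmM : m ≤ M) (hL : 0 ≤ L) (hb : 0 < b)
    (τ : ℝ) (hτ : |τ| ≤ b) :
    LipschitzOnWith
      (((1 + L ^ 2) * (1 / m ^ 2 + 1 / 2 + b / 2) + (1 / m + (M + L * b) / 2) * (2 * L)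
          + 1).toNNReal)
      (fun p : ℝ × ℝ => (p.2, (1 + p.2 ^ 2) * (1 / p.1 - (1 / 2) * (p.1 - p.2 * τ))))
      (Icc m M ×ˢ Icc (-L) L) := by
  set K' : ℝ := (1 + L ^ 2) * (1 / m ^ 2 + 1 / 2 + b / 2) + (1 / m + (M + L * b) / 2) * (2 * L)
    with hK'
  have hM : 0 < M := lt_of_lt_of_le hm hmM
  have hK'0 : 0 ≤ K' := by
    have e1 : (0:ℝ) ≤ 1 / m ^ 2 := by positivity
    have e2 : (0:ℝ) ≤ 1 / m := by positivity
    have e3 : (0:ℝ) ≤ L * b := mul_nonneg hL hb.le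
    have h1 : (0:ℝ) ≤ 1 / m ^ 2 + 1 / 2 + b / 2 := by linarith
    have h2 : (0:ℝ) ≤ 1 / m + (M + L * b) / 2 := by linarith
    have h3 : (0:ℝ) ≤ 1 + L ^ 2 := by positivity
    have h4 : (0:ℝ) ≤ 2 * L := by linarith
    rw [hK']
    exact add_nonneg (mul_nonneg h3 h1) (mul_nonneg h2 h4)
  rw [lipschitzOnWith_iff_dist_le_mul]
  intro p hp q hq
  obtain ⟨hp1, hp2⟩ := hp
  obtain ⟨hq1, hq2⟩ := hq
  have hcoe : (((K' + 1).toNNReal : NNReal) : ℝ) = K' + 1 :=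
    Real.coe_toNNReal _ (by linarith)
  rw [Prod.dist_eq, Prod.dist_eq, hcoe]
  have hDu : |p.1 - q.1| ≤ dist p.1 q.1 ⊔ dist p.2 q.2 :=
    le_trans (le_of_eq (Real.dist_eq _ _).symm) (le_max_left _ _)
  have hDw : |p.2 - q.2| ≤ dist p.1 q.1 ⊔ dist p.2 q.2 :=
    le_trans (le_of_eq (Real.dist_eq _ _).symm) (le_max_right _ _)
  have hD0 : (0:ℝ) ≤ dist p.1 q.1 ⊔ dist p.2 q.2 :=
    le_trans dist_nonneg (le_max_left _ _)
  refine max_le ?_ ?_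
  · rw [Real.dist_eq]
    calc |p.2 - q.2| ≤ dist p.1 q.1 ⊔ dist p.2 q.2 := hDw
    _ = 1 * (dist p.1 q.1 ⊔ dist p.2 q.2) := (one_mul _).symm
    _ ≤ (K' + 1) * (dist p.1 q.1 ⊔ dist p.2 q.2) := by
        apply mul_le_mul_of_nonneg_right _ hD0; linarith
  · rw [Real.dist_eq]
    exact stmt10_est m M L b τ p.1 p.2 q.1 q.2 _ hm hmM hL hb hτ hp1 hq1
      (abs_le.mpr hp2) (abs_le.mpr hq2) hDu hDw hD0

/-- A positive `C²` solution on `(−c, c)` of the profile-curve equation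
`x''/(1 + x'²) = 1/x − (1/2)(x − x' t)` for minimal surfaces of revolution in the Gaussian
space, with `x'(0) = 0`, is even: `x (−t) = x t` for all `t ∈ (−c, c)`. -/
theorem stmt10 (c : ℝ) (hc : 0 < c) (x : ℝ → ℝ)
    (hx : ContDiffOn ℝ 2 x (Set.Ioo (-c) c))
    (hpos : ∀ t ∈ Set.Ioo (-c) c, 0 < x t)
    (hode : ∀ t ∈ Set.Ioo (-c) c,
      deriv (deriv x) t / (1 + (deriv x t) ^ 2)
        = 1 / x t - (1 / 2) * (x t - deriv x t * t))
    (h0 : deriv x 0 = 0) :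
    ∀ t ∈ Set.Ioo (-c) c, x (-t) = x t := by
  -- regularity consequences
  have h2 : (2 : WithTop ℕ∞) = 1 + 1 := by norm_num
  rw [h2] at hx
  obtain ⟨hdiff, -, hd1⟩ := (contDiffOn_succ_iff_deriv_of_isOpen isOpen_Ioo).mp hx
  have hder : ∀ t ∈ Set.Ioo (-c) c, HasDerivAt x (deriv x t) t := fun t ht =>
    (hdiff.differentiableAt (isOpen_Ioo.mem_nhds ht)).hasDerivAt
  have hdd : ∀ t ∈ Set.Ioo (-c) c, HasDerivAt (deriv x) (deriv (deriv x) t) t := fun t ht =>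
    (((hd1.differentiableOn one_ne_zero)).differentiableAt (isOpen_Ioo.mem_nhds ht)).hasDerivAt
  have hode' : ∀ t ∈ Set.Ioo (-c) c,
      deriv (deriv x) t
        = (1 + (deriv x t) ^ 2) * (1 / x t - (1 / 2) * (x t - deriv x t * t)) := by
    intro t ht
    have hne : (1 + (deriv x t) ^ 2) ≠ 0 := by positivity
    have h := hode t ht
    rw [div_eq_iff hne] at h
    rw [h]; ring
  -- main argument
  intro t₀ ht₀
  have habs : |t₀| < c := abs_lt.mpr ⟨ht₀.1, ht₀.2⟩
  set b : ℝ := (|t₀| + c) / 2 with hbdef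
  have hb1 : |t₀| < b := by rw [hbdef]; linarith
  have hb2 : b < c := by rw [hbdef]; linarith
  have hb0 : 0 < b := lt_of_le_of_lt (abs_nonneg t₀) hb1
  have hsub : Set.Icc (-b) b ⊆ Set.Ioo (-c) c := by
    intro s hs
    exact ⟨lt_of_lt_of_le (by linarith) hs.1, lt_of_le_of_lt hs.2 (by linarith)⟩
  have hne : (Set.Icc (-b) b).Nonempty := Set.nonempty_Icc.mpr (by linarith)
  have hxc : ContinuousOn x (Set.Icc (-b) b) := hx.continuousOn.mono hsub
  have hdc : ContinuousOn (deriv x) (Set.Icc (-b) b) := hd1.continuousOn.mono hsub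
  obtain ⟨tm, htm, hmin⟩ := isCompact_Icc.exists_isMinOn hne hxc
  obtain ⟨tM, htM, hmax⟩ := isCompact_Icc.exists_isMaxOn hne hxc
  obtain ⟨tL, htL, hLmax⟩ := isCompact_Icc.exists_isMaxOn hne hdc.abs
  set m : ℝ := x tm with hmdef
  set M : ℝ := x tM with hMdef
  set L : ℝ := |deriv x tL| with hLdef
  have hm : 0 < m := hpos tm (hsub htm)
  have hmM : m ≤ M := isMinOn_iff.mp hmin tM htM
  have hL : 0 ≤ L := abs_nonneg _
  have hxm : ∀ t ∈ Set.Icc (-b) b, x t ∈ Set.Icc m M := fun t ht =>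
    ⟨isMinOn_iff.mp hmin t ht, isMaxOn_iff.mp hmax t ht⟩
  have hxL : ∀ t ∈ Set.Icc (-b) b, |deriv x t| ≤ L := fun t ht =>
    isMaxOn_iff.mp hLmax t ht
  -- the vector field
  set K : NNReal := ((1 + L ^ 2) * (1 / m ^ 2 + 1 / 2 + b / 2)
      + (1 / m + (M + L * b) / 2) * (2 * L) + 1).toNNReal with hKdef
  set v : ℝ → ℝ × ℝ → ℝ × ℝ := fun t p =>
    (p.2, (1 + p.2 ^ 2) * (1 / p.1 - (1 / 2) * (p.1 - p.2 * (max (-b) (min b t)))))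
    with hvdef
  set S : Set (ℝ × ℝ) := Set.Icc m M ×ˢ Set.Icc (-L) L with hSdef
  have hτb : ∀ t : ℝ, |max (-b) (min b t)| ≤ b := by
    intro t
    rw [abs_le]
    exact ⟨le_max_left _ _, max_le (by linarith) (min_le_left _ _)⟩
  have hv : ∀ t, LipschitzOnWith K (v t) S := fun t =>
    stmt10_lip m M L b hm hmM hL hb0 _ (hτb t)
  have hclamp : ∀ t ∈ Set.Ioo (-b) b, max (-b) (min b t) = t := by
    intro t ht
    rw [min_eq_right ht.2.le, max_eq_right ht.1.le]
  -- the two solutions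
  set f : ℝ → ℝ × ℝ := fun t => (x t, deriv x t) with hfdef
  set g : ℝ → ℝ × ℝ := fun t => (x (-t), -deriv x (-t)) with hgdef
  have hIoo : Set.Ioo (-b) b ⊆ Set.Icc (-b) b := Set.Ioo_subset_Icc_self
  have hf : ∀ t ∈ Set.Ioo (-b) b, HasDerivAt f (v t (f t)) t ∧ f t ∈ S := by
    intro t ht
    have ht' : t ∈ Set.Ioo (-c) c := hsub (hIoo ht)
    constructor
    · have hD : HasDerivAt f (deriv x t, deriv (deriv x) t) t :=
        (hder t ht').prodMk (hdd t ht')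
      have hveq : v t (f t) = (deriv x t, deriv (deriv x) t) := by
        rw [hvdef, hfdef]
        simp only
        rw [hclamp t ht, hode' t ht']
      rw [hveq]; exact hD
    · exact ⟨hxm t (hIoo ht), abs_le.mp (hxL t (hIoo ht))⟩
  have hg : ∀ t ∈ Set.Ioo (-b) b, HasDerivAt g (v t (g t)) t ∧ g t ∈ S := by
    intro t ht
    have hnt : -t ∈ Set.Ioo (-b) b := ⟨by linarith [ht.2], by linarith [ht.1]⟩
    have hnt' : -t ∈ Set.Ioo (-c) c := hsub (hIoo hnt)
    constructor
    · have h1 : HasDerivAt (fun s : ℝ => x (-s)) (deriv x (-t) * -1) t :=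
        (hder (-t) hnt').comp t (hasDerivAt_neg' t)
      have h2 : HasDerivAt (fun s : ℝ => -deriv x (-s)) (-(deriv (deriv x) (-t) * -1)) t :=
        ((hdd (-t) hnt').comp t (hasDerivAt_neg' t)).neg
      have hD : HasDerivAt g (deriv x (-t) * -1, -(deriv (deriv x) (-t) * -1)) t :=
        h1.prodMk h2
      have hveq : v t (g t) = (deriv x (-t) * -1, -(deriv (deriv x) (-t) * -1)) := by
        rw [hvdef, hgdef]
        simp only
        rw [hclamp t ht, hode' (-t) hnt', Prod.mk.injEq]
        exact ⟨by ring, by ring⟩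
      rw [hveq]; exact hD
    · refine ⟨hxm (-t) (hIoo hnt), ?_⟩
      have hb1' := abs_le.mp (hxL (-t) (hIoo hnt))
      have e1 : (g t).2 = -deriv x (-t) := by rw [hgdef]
      rw [Set.mem_Icc, e1]
      exact ⟨by linarith [hb1'.2], by linarith [hb1'.1]⟩
  have heq : f 0 = g 0 := by
    rw [hfdef, hgdef]
    simp only [neg_zero, h0, neg_zero]
  have h0mem : (0 : ℝ) ∈ Set.Ioo (-b) b := ⟨by linarith, hb0⟩
  have huniq : Set.EqOn f g (Set.Ioo (-b) b) :=
    ODE_solution_unique_of_mem_Ioo (s := fun _ => S) (fun t _ => hv t) h0mem hf hg heq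
  have ht₀b : t₀ ∈ Set.Ioo (-b) b := by
    have := abs_lt.mp hb1
    constructor <;> [linarith [neg_abs_le t₀]; linarith [le_abs_self t₀]]
  have hfg := huniq ht₀b
  rw [hfdef, hgdef] at hfg
  simpa using (congrArg Prod.fst hfg).symm
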